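/- If η(h·Υmax)·h·Υmax ≥ φ, then the function Δ is nondecreasing on the interval [κ2, ∞). -/

import Mathlib

/-- If `η(h·Υmax)·h·Υmax ≥ φ`, then the per-epoch stored energy change `Δ` is
nondecreasing on the third control region `[κ2, ∞)` (where the wake-up interval
is controlled). -/
theorem delta_monotone_region3
    (h Υmax Υhat αmin τtgt βΥ βτ φ δ : ℝ)
    (hh : 0 < h) (hΥmax : 0 < Υmax)
    (hΥhat1 : 0 < Υhat) (hΥhat2 : Υhat ≤ Υmax)
    (hαmin1 : 0 ≤ αmin) (hαmin2 : αmin ≤ 1)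
    (hτtgt : 0 < τtgt) (hβΥ : 0 < βΥ) (hβτ : 0 < βτ)
    (hφ : 0 ≤ φ) (hδ : 0 ≤ δ)
    (η : ℝ → ℝ) (hη : ∀ p : ℝ, 0 ≤ η p)
    (κ1 κ2 : ℝ) (hκ1 : κ1 = 1 - αmin) (hκ2 : κ2 = κ1 + (Υmax - Υhat) / βΥ)
    (ωα ωΥ ωτ : ℝ → ℝ)
    (hω1 : ∀ x : ℝ, 0 ≤ x → x ≤ κ1 →
      ωα x = x + αmin ∧ ωΥ x = Υhat ∧ ωτ x = τtgt)
    (hω2 : ∀ x : ℝ, κ1 < x → x ≤ κ2 →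
      ωα x = 1 ∧ ωΥ x = βΥ * (x - κ1) + Υhat ∧ ωτ x = τtgt)
    (hω3 : ∀ x : ℝ, κ2 < x →
      ωα x = 1 ∧ ωΥ x = Υmax ∧ ωτ x = βτ * (x - κ2) + τtgt)
    (Δ : ℝ → ℝ)
    (hΔ : ∀ x : ℝ,
      Δ x = (ωα x * η (h * ωΥ x) * h * ωΥ x - φ - δ / ωτ x) * ωτ x)
    (hmaxharv : φ ≤ η (h * Υmax) * h * Υmax) :
    MonotoneOn Δ (Set.Ici κ2) := by
  have hκ1κ2 : κ1 ≤ κ2 := by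
    rw [hκ2]
    have : 0 ≤ (Υmax - Υhat) / βΥ := div_nonneg (by linarith) hβΥ.le
    linarith
  have key : ∀ x : ℝ, κ2 ≤ x →
      Δ x = (η (h * Υmax) * h * Υmax - φ) * (βτ * (x - κ2) + τtgt) - δ := by
    intro x hx
    rcases eq_or_lt_of_le hx with heq | hlt
    · subst heq
      rcases eq_or_lt_of_le hκ1κ2 with heq1 | hlt1
      · have h0 : 0 ≤ κ2 := by rw [← heq1, hκ1]; linarith
        obtain ⟨ha, hb, hc⟩ := hω1 κ2 h0 (le_of_eq heq1.symm)
        have hzero : (Υmax - Υhat) / βΥ = 0 := by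
          have := hκ2; rw [← heq1] at this; linarith
        have hΥeq : Υhat = Υmax := by
          have := (div_eq_zero_iff.mp hzero).resolve_right (by linarith)
          linarith
        have hα : ωα κ2 = 1 := by rw [ha, ← heq1, hκ1]; ring
        rw [hΔ, hα, hb, hc, hΥeq]
        have hτ : τtgt ≠ 0 := ne_of_gt hτtgt
        field_simp
        ring
      · obtain ⟨ha, hb, hc⟩ := hω2 κ2 hlt1 le_rfl
        have hΥeq : βΥ * (κ2 - κ1) + Υhat = Υmax := by
          rw [hκ2]; field_simp; ring
        rw [hΔ, ha, hb, hc, hΥeq]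
        have hτ : τtgt ≠ 0 := ne_of_gt hτtgt
        field_simp
        ring
    · obtain ⟨ha, hb, hc⟩ := hω3 x hlt
      have hτpos : 0 < βτ * (x - κ2) + τtgt := by nlinarith
      rw [hΔ, ha, hb, hc]
      field_simp
  intro a ha b hb hab
  simp only [Set.mem_Ici] at ha hb
  rw [key a ha, key b hb]
  have hA : 0 ≤ η (h * Υmax) * h * Υmax - φ := by linarith
  nlinarith [mul_nonneg hA (mul_nonneg hβτ.le (sub_nonneg.mpr hab))]
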